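/- Suppose that, regarding G as a transitive subgroup of the symmetric group S_d (via its left regular action on itself, identified with the action on the d conjugate roots of F), G is NOT contained in the alternating group A_d. Set G⁺ = G ∩ A_d and choose δ ∈ G with G = G⁺ ⊔ δG⁺. Then for every integer i ≥ 0, a_{K_j,i} = (1/det Γ_ξ) · ( Tr_{G⁺} − δ∘Tr_{G⁺} )( ξ^i · Σ_{τ∈K_j} ∂_τ(ξ) ), where Tr_{G⁺}(η) = Σ_{σ∈G⁺} σ(η). -/

import Mathlib

open scoped BigOperators

/-- The group matrix `Γ = [X_{στ⁻¹}]` of a finite group `G`, over `ℚ[X_σ : σ ∈ G]`. -/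
noncomputable def groupMatrix (G : Type*) [Group G] [Fintype G] [DecidableEq G] :
    Matrix G G (MvPolynomial G ℚ) :=
  Matrix.of fun σ τ : G => MvPolynomial.X (σ * τ⁻¹)

/-- `∂_τ = (1/|G|) ∂(det Γ)/∂X_τ`. -/
noncomputable def groupDetDeriv (G : Type*) [Group G] [Fintype G] [DecidableEq G] (τ : G) :
    MvPolynomial G ℚ :=
  ((Fintype.card G : ℚ))⁻¹ • MvPolynomial.pderiv τ (groupMatrix G).det

private lemma derivation_finset_prod {R A : Type*} [CommRing R] [CommRing A] [Algebra R A]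
    (D : Derivation R A A) {ι : Type*} [DecidableEq ι] (s : Finset ι) (f : ι → A) :
    D (∏ i ∈ s, f i) = ∑ i ∈ s, (∏ j ∈ s.erase i, f j) * D (f i) := by
  induction s using Finset.induction_on with
  | empty => simp
  | @insert a s ha ih =>
    rw [Finset.prod_insert ha, D.leibniz, smul_eq_mul, smul_eq_mul, ih, Finset.mul_sum,
      Finset.sum_insert ha, Finset.erase_insert ha, add_comm]
    congr 1
    refine Finset.sum_congr rfl fun i hi => ?_
    rw [Finset.erase_insert_of_ne (by rintro rfl; exact ha hi),
      Finset.prod_insert (fun h => ha (Finset.mem_of_mem_erase h)), mul_assoc]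

private lemma derivation_det {R A : Type*} [CommRing R] [CommRing A] [Algebra R A]
    (D : Derivation R A A) {n : Type*} [DecidableEq n] [Fintype n] (M : Matrix n n A) :
    D M.det = ∑ i : n, (M.updateRow i fun j => D (M i j)).det := by
  have hcast : ∀ z : ℤ, D ((z : A)) = 0 := fun z => by
    rw [← map_intCast (algebraMap R A) z]; exact D.map_algebraMap _
  have hmul : ∀ (z : ℤ) (x : A), D ((z : A) * x) = (z : A) * D x := fun z x => by
    rw [D.leibniz, hcast, smul_zero, add_zero, smul_eq_mul]
  rw [Matrix.det_apply', map_sum]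
  have hL : ∀ σ : Equiv.Perm n,
      D (((Equiv.Perm.sign σ : ℤ) : A) * ∏ i, M (σ i) i)
        = ∑ i : n, ((Equiv.Perm.sign σ : ℤ) : A) *
            ((∏ j ∈ Finset.univ.erase i, M (σ j) j) * D (M (σ i) i)) := by
    intro σ
    rw [hmul, derivation_finset_prod, Finset.mul_sum]
  have hR : ∀ i : n, (M.updateRow i fun j => D (M i j)).det
      = ∑ σ : Equiv.Perm n, ((Equiv.Perm.sign σ : ℤ) : A) *
          ((∏ j ∈ Finset.univ.erase (σ⁻¹ i), M (σ j) j) * D (M i (σ⁻¹ i))) := by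
    intro i
    rw [Matrix.det_apply']
    refine Finset.sum_congr rfl fun σ _ => ?_
    congr 1
    rw [← Finset.mul_prod_erase Finset.univ _ (Finset.mem_univ (σ⁻¹ i))]
    rw [mul_comm]
    congr 1
    · refine Finset.prod_congr rfl fun j hj => ?_
      have : σ j ≠ i := by
        intro h
        exact (Finset.ne_of_mem_erase hj) (by rw [← h, Equiv.Perm.coe_inv, Equiv.symm_apply_apply])
      rw [Matrix.updateRow_ne this]
    · rw [Equiv.Perm.coe_inv, Equiv.apply_symm_apply, Matrix.updateRow_self]
  calc ∑ σ : Equiv.Perm n, D (((Equiv.Perm.sign σ : ℤ) : A) * ∏ i, M (σ i) i)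
      = ∑ σ : Equiv.Perm n, ∑ i : n, ((Equiv.Perm.sign σ : ℤ) : A) *
          ((∏ j ∈ Finset.univ.erase i, M (σ j) j) * D (M (σ i) i)) :=
        Finset.sum_congr rfl fun σ _ => hL σ
    _ = ∑ σ : Equiv.Perm n, ∑ i : n, ((Equiv.Perm.sign σ : ℤ) : A) *
          ((∏ j ∈ Finset.univ.erase (σ⁻¹ i), M (σ j) j) * D (M i (σ⁻¹ i))) := by
        refine Finset.sum_congr rfl fun σ _ => ?_
        exact Fintype.sum_equiv σ _ _ fun i => by
          rw [Equiv.Perm.coe_inv, Equiv.symm_apply_apply]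
    _ = ∑ i : n, ∑ σ : Equiv.Perm n, ((Equiv.Perm.sign σ : ℤ) : A) *
          ((∏ j ∈ Finset.univ.erase (σ⁻¹ i), M (σ j) j) * D (M i (σ⁻¹ i))) :=
        Finset.sum_comm
    _ = _ := Finset.sum_congr rfl fun i _ => (hR i).symm

private lemma pderiv_det_groupMatrix {G : Type*} [Group G] [Fintype G] [DecidableEq G] (τ : G) :
    MvPolynomial.pderiv τ (groupMatrix G).det
      = ∑ ρ : G, (groupMatrix G).adjugate (τ⁻¹ * ρ) ρ := by
  rw [derivation_det (MvPolynomial.pderiv τ)]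
  refine Finset.sum_congr rfl fun ρ _ => ?_
  rw [Matrix.adjugate_apply]
  have hrow : (fun j => MvPolynomial.pderiv τ (groupMatrix G ρ j))
      = Pi.single (τ⁻¹ * ρ) (1 : MvPolynomial G ℚ) := by
    funext κ
    show MvPolynomial.pderiv τ (MvPolynomial.X (ρ * κ⁻¹)) = _
    rw [MvPolynomial.pderiv_X, Pi.single_apply, Pi.single_apply]
    refine if_congr ?_ rfl rfl
    constructor
    · intro h; rw [← h]; group
    · intro h; rw [h]; group
  rw [hrow]

private lemma adjugate_translate {G R : Type*} [Group G] [Fintype G] [DecidableEq G] [CommRing R]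
    (f : G → R) (g ρ κ : G) :
    (Matrix.of fun σ τ : G => f (σ * τ⁻¹)).adjugate (ρ * g) (κ * g)
      = (Matrix.of fun σ τ : G => f (σ * τ⁻¹)).adjugate ρ κ := by
  set A : Matrix G G R := Matrix.of fun σ τ : G => f (σ * τ⁻¹) with hA
  have hsub : A.submatrix (Equiv.mulRight g) (Equiv.mulRight g) = A := by
    ext σ τ
    simp only [Matrix.submatrix_apply, hA, Matrix.of_apply, Equiv.coe_mulRight]
    congr 1
    group
  calc A.adjugate (ρ * g) (κ * g)
      = (A.adjugate.submatrix (Equiv.mulRight g) (Equiv.mulRight g)) ρ κ := rfl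
    _ = ((A.submatrix (Equiv.mulRight g) (Equiv.mulRight g)).adjugate) ρ κ := by
        rw [Matrix.adjugate_submatrix_equiv_self]
    _ = A.adjugate ρ κ := by rw [hsub]

private lemma adjugate_rowPerm {n R : Type*} [DecidableEq n] [Fintype n] [CommRing R]
    (A : Matrix n n R) (π : Equiv.Perm n) (i j : n) :
    (A.submatrix π id).adjugate i j
      = ((Equiv.Perm.sign π : ℤ) : R) * A.adjugate i (π j) := by
  rw [Matrix.adjugate_apply, Matrix.adjugate_apply]
  have h : (A.submatrix ⇑π id).updateRow j (Pi.single i 1)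
      = (A.updateRow (π j) (Pi.single i 1)).submatrix π id := by
    ext r s
    by_cases h : r = j
    · subst h
      simp [Matrix.updateRow_self, Matrix.submatrix_apply]
    · rw [Matrix.updateRow_ne h, Matrix.submatrix_apply,
        Matrix.submatrix_apply, Matrix.updateRow_ne (fun hh => h (π.injective hh))]
  rw [h, Matrix.det_permute]

private lemma aeval_groupDetDeriv {G : Type*} [Group G] [Fintype G] [DecidableEq G]
    {R : Type*} [CommRing R] [Algebra ℚ R] (f : G → R) (τ : G) :
    MvPolynomial.aeval f (groupDetDeriv G τ)
      = (Matrix.of fun σ τ' : G => f (σ * τ'⁻¹)).adjugate τ⁻¹ 1 := by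
  have hmap : (groupMatrix G).map (MvPolynomial.aeval f)
      = Matrix.of (fun σ τ' : G => f (σ * τ'⁻¹)) := by
    ext σ τ'
    simp [groupMatrix, Matrix.map_apply]
  have hadj : ∀ i j : G, MvPolynomial.aeval f ((groupMatrix G).adjugate i j)
      = (Matrix.of fun σ τ' : G => f (σ * τ'⁻¹)).adjugate i j := by
    intro i j
    have h2 := RingHom.map_adjugate
      ((MvPolynomial.aeval f : MvPolynomial G ℚ →ₐ[ℚ] R) : MvPolynomial G ℚ →+* R)
      (groupMatrix G)
    rw [RingHom.mapMatrix_apply, RingHom.mapMatrix_apply] at h2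
    have h3 := congrFun (congrFun (congrArg (fun M => M) h2) i) j
    simpa [Matrix.map_apply, hmap] using h3
  unfold groupDetDeriv
  rw [MvPolynomial.smul_eq_C_mul, _root_.map_mul, pderiv_det_groupMatrix, map_sum]
  have : ∀ ρ : G, MvPolynomial.aeval f ((groupMatrix G).adjugate (τ⁻¹ * ρ) ρ)
      = (Matrix.of fun σ τ' : G => f (σ * τ'⁻¹)).adjugate τ⁻¹ 1 := by
    intro ρ
    rw [hadj]
    have := adjugate_translate f ρ τ⁻¹ 1
    rw [one_mul] at this
    exact this
  rw [Finset.sum_congr rfl fun ρ _ => this ρ, Finset.sum_const, Finset.card_univ]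
  rw [MvPolynomial.aeval_C, nsmul_eq_mul, ← mul_assoc]
  have hcard : ((Fintype.card G : ℚ)) ≠ 0 := by
    exact_mod_cast Fintype.card_ne_zero
  rw [← map_natCast (algebraMap ℚ R) (Fintype.card G), ← _root_.map_mul,
    inv_mul_cancel₀ hcard, _root_.map_one, one_mul]

/-- Suppose that `G = Gal(L/ℚ)`, viewed as a permutation group via its left regular
action, is *not* contained in the alternating group, and choose `δ ∈ G` acting as an odd
permutation (so that `G = G⁺ ⊔ δG⁺`, where `G⁺` consists of the elements acting as even
permutations).  Then for every `i ≥ 0`,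
`a_{K,i} = (1/det Γ_ξ) (Tr_{G⁺} - δ ∘ Tr_{G⁺})(ξ^i Σ_{τ∈K} ∂_τ(ξ))`, where
`(a_{K,i})_i ∈ RS(F,ℚ)` is the sequence whose first `d` terms are the column of
`P Γ_ξ⁻¹ κ` corresponding to the conjugacy class `K`, and `Tr_{G⁺}(η) = Σ_{σ∈G⁺} σ(η)`. -/
theorem stmt3 (L : Type*) [Field L] [CharZero L] [FiniteDimensional ℚ L] [IsGalois ℚ L]
    [DecidableEq (L ≃ₐ[ℚ] L)]
    (d : ℕ) (hd : 0 < d) (hdeg : Module.finrank ℚ L = d)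
    (c : Fin d → ℤ) (F : Polynomial ℤ)
    (hF : F = Polynomial.X ^ d + ∑ j : Fin d, Polynomial.C (c j) * Polynomial.X ^ (j : ℕ))
    (hFirr : Irreducible (F.map (Int.castRingHom ℚ)))
    (ξ : L) (hξ : Polynomial.aeval ξ F = 0)
    (hNB : ∃ b : Module.Basis (L ≃ₐ[ℚ] L) ℚ L, ∀ σ : L ≃ₐ[ℚ] L, b σ = σ ξ)
    (δ : L ≃ₐ[ℚ] L) (hδ : Equiv.Perm.sign (Equiv.mulLeft δ) = -1)
    (K : ConjClasses (L ≃ₐ[ℚ] L)) [DecidablePred (· ∈ K.carrier)]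
    (a : ℕ → ℚ)
    (ha : ∀ i, a (i + d) = -∑ j : Fin d, (c j : ℚ) * a (i + (j : ℕ)))
    (hinit : ∀ i : Fin d, algebraMap ℚ L (a (i : ℕ)) =
      ∑ σ : L ≃ₐ[ℚ] L, (σ⁻¹ ξ) ^ (i : ℕ) *
        ((Matrix.of fun σ' τ' : L ≃ₐ[ℚ] L => (σ' * τ'⁻¹) ξ)⁻¹.mulVec
          (fun τ : L ≃ₐ[ℚ] L => if τ ∈ K.carrier then (1 : L) else 0)) σ) :
    ∀ i : ℕ, algebraMap ℚ L (a i) =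
      ((Matrix.of fun σ' τ' : L ≃ₐ[ℚ] L => (σ' * τ'⁻¹) ξ).det)⁻¹ *
        ((∑ σ ∈ Finset.univ.filter
              (fun σ : L ≃ₐ[ℚ] L => Equiv.Perm.sign (Equiv.mulLeft σ) = 1),
            σ (ξ ^ i * ∑ τ : L ≃ₐ[ℚ] L,
              if τ ∈ K.carrier then
                MvPolynomial.aeval (fun ρ : L ≃ₐ[ℚ] L => ρ ξ) (groupDetDeriv _ τ)
              else 0)) -
          δ (∑ σ ∈ Finset.univ.filter
              (fun σ : L ≃ₐ[ℚ] L => Equiv.Perm.sign (Equiv.mulLeft σ) = 1),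
            σ (ξ ^ i * ∑ τ : L ≃ₐ[ℚ] L,
              if τ ∈ K.carrier then
                MvPolynomial.aeval (fun ρ : L ≃ₐ[ℚ] L => ρ ξ) (groupDetDeriv _ τ)
              else 0))) := by
  -- Notation
  set Γ : Matrix (L ≃ₐ[ℚ] L) (L ≃ₐ[ℚ] L) L :=
    Matrix.of fun σ' τ' : L ≃ₐ[ℚ] L => (σ' * τ'⁻¹) ξ with hΓ
  set S : L := ∑ τ : L ≃ₐ[ℚ] L,
      if τ ∈ K.carrier then
        MvPolynomial.aeval (fun ρ : L ≃ₐ[ℚ] L => ρ ξ) (groupDetDeriv _ τ)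
      else 0 with hSdef
  clear_value S
  -- sign facts
  have hmulLeft_mul : ∀ a b : L ≃ₐ[ℚ] L,
      Equiv.mulLeft (a * b) = Equiv.mulLeft a * Equiv.mulLeft b := by
    intro a b
    exact Equiv.ext fun x => (mul_assoc a b x)
  have hsgn_mul : ∀ a b : L ≃ₐ[ℚ] L,
      Equiv.Perm.sign (Equiv.mulLeft (a * b))
        = Equiv.Perm.sign (Equiv.mulLeft a) * Equiv.Perm.sign (Equiv.mulLeft b) := by
    intro a b
    rw [hmulLeft_mul, map_mul]
  have hsgn_inv : ∀ a : L ≃ₐ[ℚ] L,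
      Equiv.Perm.sign (Equiv.mulLeft a⁻¹) = Equiv.Perm.sign (Equiv.mulLeft a) := by
    intro a
    have h1 : Equiv.mulLeft a⁻¹ = (Equiv.mulLeft a)⁻¹ := by
      ext x
      rfl
    rw [h1, map_inv]
    rcases Int.units_eq_one_or (Equiv.Perm.sign (Equiv.mulLeft a)) with h | h <;> rw [h] <;> rfl
  -- the partial derivative evaluates to an adjugate entry
  have hpartial : ∀ τ : L ≃ₐ[ℚ] L,
      MvPolynomial.aeval (fun ρ : L ≃ₐ[ℚ] L => ρ ξ) (groupDetDeriv _ τ)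
        = Γ.adjugate τ⁻¹ 1 :=
    fun τ => aeval_groupDetDeriv (fun ρ : L ≃ₐ[ℚ] L => ρ ξ) τ
  -- key adjugate identity
  have keyS : ∀ σ : L ≃ₐ[ℚ] L,
      (∑ τ : L ≃ₐ[ℚ] L, if τ ∈ K.carrier then Γ.adjugate σ τ else 0)
        = ((Equiv.Perm.sign (Equiv.mulLeft σ) : ℤ) : L) * σ⁻¹ S := by
    intro σ
    have h1 : σ⁻¹ S = ∑ τ : L ≃ₐ[ℚ] L,
        if τ ∈ K.carrier then σ⁻¹ (Γ.adjugate τ⁻¹ 1) else 0 := by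
      rw [hSdef, map_sum]
      refine Finset.sum_congr rfl fun τ _ => ?_
      rw [apply_ite (⇑(σ⁻¹ : L ≃ₐ[ℚ] L)), map_zero, hpartial τ]
    have h2 : ∀ τ : L ≃ₐ[ℚ] L,
        ((Equiv.Perm.sign (Equiv.mulLeft σ) : ℤ) : L) * σ⁻¹ (Γ.adjugate τ⁻¹ 1)
          = Γ.adjugate σ (σ⁻¹ * τ * σ) := by
      intro τ
      -- push σ⁻¹ through the adjugate
      have hmapadj : σ⁻¹ (Γ.adjugate τ⁻¹ 1) = (Γ.map ⇑(σ⁻¹ : L ≃ₐ[ℚ] L)).adjugate τ⁻¹ 1 := by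
        have h2' := RingHom.map_adjugate ((σ⁻¹ : L ≃ₐ[ℚ] L) : L →+* L) Γ
        rw [RingHom.mapMatrix_apply, RingHom.mapMatrix_apply] at h2'
        have h3 := congrFun (congrFun (congrArg (fun M => M) h2') τ⁻¹) 1
        simpa [Matrix.map_apply] using h3
      have hperm : Γ.map ⇑(σ⁻¹ : L ≃ₐ[ℚ] L)
          = Γ.submatrix (⇑(Equiv.mulLeft (σ⁻¹ : L ≃ₐ[ℚ] L))) id := by
        ext ρ κ
        simp only [Matrix.map_apply, Matrix.submatrix_apply, Equiv.coe_mulLeft, hΓ,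
          Matrix.of_apply, id_eq]
        rw [← AlgEquiv.mul_apply, ← mul_assoc]
      rw [hmapadj, hperm, adjugate_rowPerm, hsgn_inv σ, ← mul_assoc]
      have hone : ((Equiv.Perm.sign (Equiv.mulLeft σ) : ℤ) : L)
          * ((Equiv.Perm.sign (Equiv.mulLeft σ) : ℤ) : L) = 1 := by
        rw [← Int.cast_mul, ← Units.val_mul, Int.units_mul_self, Units.val_one, Int.cast_one]
      rw [hone, one_mul]
      have h3 := adjugate_translate (fun ρ : L ≃ₐ[ℚ] L => ρ ξ) (τ * σ) τ⁻¹ σ⁻¹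
      rw [inv_mul_cancel_left, ← mul_assoc] at h3
      simp only [Equiv.coe_mulLeft, mul_one]
      exact h3.symm
    have h4 : (∑ τ : L ≃ₐ[ℚ] L, if τ ∈ K.carrier then Γ.adjugate σ (σ⁻¹ * τ * σ) else 0)
        = ∑ τ : L ≃ₐ[ℚ] L, if τ ∈ K.carrier then Γ.adjugate σ τ else 0 := by
      let e : (L ≃ₐ[ℚ] L) ≃ (L ≃ₐ[ℚ] L) :=
        ⟨fun τ => σ * τ * σ⁻¹, fun τ => σ⁻¹ * τ * σ, fun τ => by group, fun τ => by group⟩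
      rw [← Equiv.sum_comp e
        (fun τ => if τ ∈ K.carrier then Γ.adjugate σ (σ⁻¹ * τ * σ) else 0)]
      refine Finset.sum_congr rfl fun τ _ => ?_
      have harg : σ⁻¹ * (σ * τ * σ⁻¹) * σ = τ := by group
      have hmem : (σ * τ * σ⁻¹) ∈ K.carrier ↔ τ ∈ K.carrier := by
        rw [ConjClasses.mem_carrier_iff_mk_eq, ConjClasses.mem_carrier_iff_mk_eq]
        have : ConjClasses.mk (σ * τ * σ⁻¹) = ConjClasses.mk τ :=
          ConjClasses.mk_eq_mk_iff_isConj.mpr (isConj_iff.mpr ⟨σ⁻¹, by group⟩)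
        rw [this]
      show (if (σ * τ * σ⁻¹) ∈ K.carrier then Γ.adjugate σ (σ⁻¹ * (σ * τ * σ⁻¹) * σ) else 0)
        = if τ ∈ K.carrier then Γ.adjugate σ τ else 0
      simp only [harg, hmem]
    rw [h1, Finset.mul_sum, ← h4]
    refine Finset.sum_congr rfl fun τ _ => ?_
    rw [mul_ite, mul_zero, h2 τ]
  -- rewriting the signed trace
  have hsigned : ∀ x : L,
      ((∑ σ ∈ Finset.univ.filter
          (fun σ : L ≃ₐ[ℚ] L => Equiv.Perm.sign (Equiv.mulLeft σ) = 1), σ x)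
        - δ (∑ σ ∈ Finset.univ.filter
          (fun σ : L ≃ₐ[ℚ] L => Equiv.Perm.sign (Equiv.mulLeft σ) = 1), σ x))
      = ∑ σ : L ≃ₐ[ℚ] L, ((Equiv.Perm.sign (Equiv.mulLeft σ) : ℤ) : L) * σ x := by
    intro x
    have hδsum : δ (∑ σ ∈ Finset.univ.filter
        (fun σ : L ≃ₐ[ℚ] L => Equiv.Perm.sign (Equiv.mulLeft σ) = 1), σ x)
        = ∑ σ ∈ Finset.univ.filter
            (fun σ : L ≃ₐ[ℚ] L => Equiv.Perm.sign (Equiv.mulLeft σ) = -1), σ x := by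
      rw [map_sum]
      refine Finset.sum_nbij' (fun σ => δ * σ) (fun σ => δ⁻¹ * σ) ?_ ?_ ?_ ?_ ?_
      · intro σ hσ
        simp only [Finset.mem_filter, Finset.mem_univ, true_and] at hσ ⊢
        rw [hsgn_mul, hσ, hδ, mul_one]
      · intro σ hσ
        simp only [Finset.mem_filter, Finset.mem_univ, true_and] at hσ ⊢
        rw [hsgn_mul, hσ, hsgn_inv, hδ]
        rfl
      · intro σ _
        group
      · intro σ _
        group
      · intro σ _
        rw [AlgEquiv.mul_apply]
    rw [hδsum]
    have hsplit : (∑ σ : L ≃ₐ[ℚ] L, ((Equiv.Perm.sign (Equiv.mulLeft σ) : ℤ) : L) * σ x)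
        = (∑ σ ∈ Finset.univ.filter
            (fun σ : L ≃ₐ[ℚ] L => Equiv.Perm.sign (Equiv.mulLeft σ) = 1), σ x)
          - ∑ σ ∈ Finset.univ.filter
            (fun σ : L ≃ₐ[ℚ] L => Equiv.Perm.sign (Equiv.mulLeft σ) = -1), σ x := by
      rw [← Finset.sum_filter_add_sum_filter_not Finset.univ
        (fun σ : L ≃ₐ[ℚ] L => Equiv.Perm.sign (Equiv.mulLeft σ) = 1)
        (fun σ : L ≃ₐ[ℚ] L => ((Equiv.Perm.sign (Equiv.mulLeft σ) : ℤ) : L) * σ x)]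
      have hf1 : ∀ σ ∈ Finset.univ.filter
          (fun σ : L ≃ₐ[ℚ] L => Equiv.Perm.sign (Equiv.mulLeft σ) = 1),
          ((Equiv.Perm.sign (Equiv.mulLeft σ) : ℤ) : L) * σ x = σ x := by
        intro σ hσ
        simp only [Finset.mem_filter] at hσ
        rw [hσ.2]
        simp
      have hfilter : Finset.univ.filter
          (fun σ : L ≃ₐ[ℚ] L => ¬ Equiv.Perm.sign (Equiv.mulLeft σ) = 1)
          = Finset.univ.filter
            (fun σ : L ≃ₐ[ℚ] L => Equiv.Perm.sign (Equiv.mulLeft σ) = -1) := by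
        refine Finset.filter_congr fun σ _ => ?_
        rcases Int.units_eq_one_or (Equiv.Perm.sign (Equiv.mulLeft σ)) with h | h <;>
          simp [h]
      have hf2 : ∀ σ ∈ Finset.univ.filter
          (fun σ : L ≃ₐ[ℚ] L => Equiv.Perm.sign (Equiv.mulLeft σ) = -1),
          ((Equiv.Perm.sign (Equiv.mulLeft σ) : ℤ) : L) * σ x = -(σ x) := by
        intro σ hσ
        simp only [Finset.mem_filter] at hσ
        rw [hσ.2]
        simp
      rw [Finset.sum_congr rfl hf1, hfilter, Finset.sum_congr rfl hf2, Finset.sum_neg_distrib]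
      ring
    exact hsplit.symm
  -- the algebraic relation satisfied by ξ
  rw [hF] at hξ
  simp only [map_add, map_pow, Polynomial.aeval_X, map_sum, map_mul, Polynomial.aeval_C,
    algebraMap_int_eq, eq_intCast, map_intCast] at hξ
  have hrel : (ξ : L) ^ d = -∑ j : Fin d, (c j : L) * ξ ^ (j : ℕ) := by
    linear_combination hξ
  -- the base case, in signed-sum form
  have hbase : ∀ i : ℕ, i < d → algebraMap ℚ L (a i)
      = (Γ.det)⁻¹ * ∑ σ : L ≃ₐ[ℚ] L,
          ((Equiv.Perm.sign (Equiv.mulLeft σ) : ℤ) : L) * σ (ξ ^ i * S) := by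
    intro i hi
    have hin := hinit ⟨i, hi⟩
    simp only [Fin.val_mk] at hin
    rw [hin]
    have hv : ∀ σ : L ≃ₐ[ℚ] L, (Γ⁻¹.mulVec
        (fun τ : L ≃ₐ[ℚ] L => if τ ∈ K.carrier then (1 : L) else 0)) σ
        = (Γ.det)⁻¹ * ∑ τ : L ≃ₐ[ℚ] L, if τ ∈ K.carrier then Γ.adjugate σ τ else 0 := by
      intro σ
      rw [Matrix.inv_def, Ring.inverse_eq_inv']
      simp only [Matrix.mulVec, dotProduct, Matrix.smul_apply, smul_eq_mul,
        Finset.mul_sum]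
      refine Finset.sum_congr rfl fun τ _ => ?_
      by_cases h : τ ∈ K.carrier <;> simp [h]
    calc (∑ σ : L ≃ₐ[ℚ] L, (σ⁻¹ ξ) ^ i * (Γ⁻¹.mulVec
          (fun τ : L ≃ₐ[ℚ] L => if τ ∈ K.carrier then (1 : L) else 0)) σ)
        = ∑ σ : L ≃ₐ[ℚ] L, (σ⁻¹ ξ) ^ i * ((Γ.det)⁻¹ *
            (((Equiv.Perm.sign (Equiv.mulLeft σ) : ℤ) : L) * σ⁻¹ S)) := by
          refine Finset.sum_congr rfl fun σ _ => ?_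
          rw [hv σ, keyS σ]
      _ = (Γ.det)⁻¹ * ∑ σ : L ≃ₐ[ℚ] L,
            ((Equiv.Perm.sign (Equiv.mulLeft σ) : ℤ) : L) * ((σ⁻¹ ξ) ^ i * σ⁻¹ S) := by
          rw [Finset.mul_sum]
          refine Finset.sum_congr rfl fun σ _ => ?_
          ring
      _ = (Γ.det)⁻¹ * ∑ σ : L ≃ₐ[ℚ] L,
            ((Equiv.Perm.sign (Equiv.mulLeft σ) : ℤ) : L) * ((σ ξ) ^ i * σ S) := by
          congr 1
          rw [← Equiv.sum_comp (Equiv.inv (L ≃ₐ[ℚ] L))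
            (fun σ : L ≃ₐ[ℚ] L =>
              ((Equiv.Perm.sign (Equiv.mulLeft σ) : ℤ) : L) * ((σ ξ) ^ i * σ S))]
          refine Finset.sum_congr rfl fun σ _ => ?_
          simp only [Equiv.inv_apply]
          rw [hsgn_inv]
      _ = (Γ.det)⁻¹ * ∑ σ : L ≃ₐ[ℚ] L,
            ((Equiv.Perm.sign (Equiv.mulLeft σ) : ℤ) : L) * σ (ξ ^ i * S) := by
          congr 1
          refine Finset.sum_congr rfl fun σ _ => ?_
          rw [map_mul, map_pow]
  -- the recurrence satisfied by each σ (ξ^m * S)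
  have hxim : ∀ k : ℕ, ξ ^ (k + d) * S = -∑ j : Fin d, (c j : L) * (ξ ^ (k + (j : ℕ)) * S) := by
    intro k
    rw [pow_add, hrel, mul_neg, neg_mul, Finset.mul_sum, Finset.sum_mul]
    congr 1
    refine Finset.sum_congr rfl fun j _ => ?_
    rw [pow_add]
    ring
  -- main induction
  intro i
  induction i using Nat.strong_induction_on with
  | _ i ih =>
    rw [hsigned (ξ ^ i * S)]
    by_cases hi : i < d
    · exact hbase i hi
    · push_neg at hi
      obtain ⟨k, rfl⟩ : ∃ k, i = k + d := ⟨i - d, (Nat.sub_add_cancel hi).symm⟩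
      have hLHS : algebraMap ℚ L (a (k + d))
          = -∑ j : Fin d, (c j : L) * algebraMap ℚ L (a (k + (j : ℕ))) := by
        rw [ha k, map_neg, map_sum]
        refine congrArg Neg.neg (Finset.sum_congr rfl fun j _ => ?_)
        rw [map_mul, map_intCast]
      have hih : ∀ j : Fin d, algebraMap ℚ L (a (k + (j : ℕ)))
          = (Γ.det)⁻¹ * ∑ σ : L ≃ₐ[ℚ] L,
              ((Equiv.Perm.sign (Equiv.mulLeft σ) : ℤ) : L) * σ (ξ ^ (k + (j : ℕ)) * S) := by
        intro j
        have h := ih (k + (j : ℕ)) (by omega)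
        rw [h, hsigned (ξ ^ (k + (j : ℕ)) * S)]
      rw [hLHS]
      have hs : ∀ σ : L ≃ₐ[ℚ] L, σ (ξ ^ (k + d) * S)
          = -∑ j : Fin d, (c j : L) * σ (ξ ^ (k + (j : ℕ)) * S) := by
        intro σ
        rw [hxim k, map_neg, map_sum]
        refine congrArg Neg.neg (Finset.sum_congr rfl fun j _ => ?_)
        rw [map_mul, map_intCast]
      have hR1 : (Γ.det)⁻¹ * ∑ σ : L ≃ₐ[ℚ] L,
          ((Equiv.Perm.sign (Equiv.mulLeft σ) : ℤ) : L) * σ (ξ ^ (k + d) * S)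
          = ∑ σ : L ≃ₐ[ℚ] L, ∑ j : Fin d, -((Γ.det)⁻¹ *
              (((Equiv.Perm.sign (Equiv.mulLeft σ) : ℤ) : L) *
                ((c j : L) * σ (ξ ^ (k + (j : ℕ)) * S)))) := by
        rw [Finset.mul_sum]
        refine Finset.sum_congr rfl fun σ _ => ?_
        rw [hs σ, mul_neg, mul_neg, Finset.mul_sum, Finset.mul_sum, ← Finset.sum_neg_distrib]
      have hR2 : (-∑ j : Fin d, (c j : L) * ((Γ.det)⁻¹ * ∑ σ : L ≃ₐ[ℚ] L,
          ((Equiv.Perm.sign (Equiv.mulLeft σ) : ℤ) : L) * σ (ξ ^ (k + (j : ℕ)) * S)))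
          = ∑ j : Fin d, ∑ σ : L ≃ₐ[ℚ] L, -((Γ.det)⁻¹ *
              (((Equiv.Perm.sign (Equiv.mulLeft σ) : ℤ) : L) *
                ((c j : L) * σ (ξ ^ (k + (j : ℕ)) * S)))) := by
        rw [← Finset.sum_neg_distrib]
        refine Finset.sum_congr rfl fun j _ => ?_
        rw [Finset.mul_sum, Finset.mul_sum, ← Finset.sum_neg_distrib]
        refine Finset.sum_congr rfl fun σ _ => ?_
        ring
      calc -∑ j : Fin d, (c j : L) * algebraMap ℚ L (a (k + (j : ℕ)))
          = -∑ j : Fin d, (c j : L) * ((Γ.det)⁻¹ * ∑ σ : L ≃ₐ[ℚ] L,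
              ((Equiv.Perm.sign (Equiv.mulLeft σ) : ℤ) : L) * σ (ξ ^ (k + (j : ℕ)) * S)) := by
            refine congrArg Neg.neg (Finset.sum_congr rfl fun j _ => ?_)
            rw [hih j]
        _ = ∑ j : Fin d, ∑ σ : L ≃ₐ[ℚ] L, -((Γ.det)⁻¹ *
              (((Equiv.Perm.sign (Equiv.mulLeft σ) : ℤ) : L) *
                ((c j : L) * σ (ξ ^ (k + (j : ℕ)) * S)))) := hR2
        _ = ∑ σ : L ≃ₐ[ℚ] L, ∑ j : Fin d, -((Γ.det)⁻¹ *
              (((Equiv.Perm.sign (Equiv.mulLeft σ) : ℤ) : L) *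
                ((c j : L) * σ (ξ ^ (k + (j : ℕ)) * S)))) := Finset.sum_comm
        _ = (Γ.det)⁻¹ * ∑ σ : L ≃ₐ[ℚ] L,
              ((Equiv.Perm.sign (Equiv.mulLeft σ) : ℤ) : L) * σ (ξ ^ (k + d) * S) := hR1.symm
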